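/- arXiv:2507.04714 — 2 statements merged into one kernel-verified Lean document; each statement's English description precedes it below -/
import Mathlib

section
/- Let T be a tree with all degrees odd and let Q = v_1 ... v_n be a path in T such that at most (deg_T(v_n)-1)/2 neighbours of v_n are leaves and strictly fewer than (deg_T(v_i)-1)/2 neighbours of v_i are leaves for each i < n. Then there exists an initial opinion assignment ξ_0 : V(T) → {-1,1} such that for every i ∈ [n], ξ_{i+1}(v_i) = -1 while ξ_t(v_i) = 1 for all t ≤ i. -/
open SimpleGraph Set

variable {V : Type*}

/-- The majority-dynamics process generated by the initial opinion vector `σ`: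
`ξ (t+1) v` is the sign of the sum of the opinions `ξ t` over the neighbours of `v`. -/
noncomputable def dyn (G : SimpleGraph V) (σ : V → ℤ) : ℕ → V → ℤ
  | 0 => σ
  | t + 1 => fun v => if 0 < ∑ᶠ u ∈ G.neighborSet v, dyn G σ t u then 1 else -1

/-- `σ` is a valid vector of opinions, i.e. takes values in `{-1, 1}`. -/
def PM (σ : V → ℤ) : Prop := ∀ v, σ v = 1 ∨ σ v = -1

/-- The degree of a vertex. -/
noncomputable def degree' (G : SimpleGraph V) (v : V) : ℕ := (G.neighborSet v).ncard

/-- A leaf is a vertex of degree 1. -/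
def IsLeaf (G : SimpleGraph V) (v : V) : Prop := degree' G v = 1

/-- The number of neighbours of `v` that are leaves. -/
noncomputable def leafNbrs (G : SimpleGraph V) (v : V) : ℕ := {u | G.Adj v u ∧ IsLeaf G u}.ncard

/-- All degrees of `G` are odd. -/
def OddDegrees (G : SimpleGraph V) : Prop := ∀ v, Odd (degree' G v)

/-- `v` is `t`-stable for the process `ξ`. -/
def Stable (ξ : ℕ → V → ℤ) (v : V) (t : ℕ) : Prop :=
  ∀ s, t ≤ s → s % 2 = t % 2 → ξ (s + 2) v = ξ s v

attribute [local instance] Classical.propDecidable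

lemma dyn_succ [Fintype V] (G : SimpleGraph V) (σ : V → ℤ) (t : ℕ) (x : V) :
    dyn G σ (t + 1) x = if 0 < ∑ u ∈ G.neighborFinset x, dyn G σ t u then 1 else -1 := by
  have h : G.neighborSet x = ↑(G.neighborFinset x) := by
    rw [neighborFinset_def]; simp
  rw [dyn]
  simp only [h, finsum_mem_coe_finset]

noncomputable def pth (G : SimpleGraph V) (hT : G.IsTree) (x r : V) : G.Walk x r :=
  (hT.existsUnique_path x r).exists.choose

lemma pth_isPath (G : SimpleGraph V) (hT : G.IsTree) (x r : V) : (pth G hT x r).IsPath :=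
  (hT.existsUnique_path x r).exists.choose_spec

lemma pth_eq (G : SimpleGraph V) (hT : G.IsTree) {x r : V} (q : G.Walk x r) (hq : q.IsPath) :
    q = pth G hT x r :=
  ((hT.existsUnique_path x r).unique hq (pth_isPath G hT x r))

noncomputable def par (G : SimpleGraph V) (hT : G.IsTree) (r x : V) : V :=
  (pth G hT x r).getVert 1

lemma pth_eq_cons (G : SimpleGraph V) (hT : G.IsTree) {x r : V} (hx : x ≠ r) :
    ∃ h : G.Adj x (par G hT r x),
      pth G hT x r = SimpleGraph.Walk.cons h (pth G hT (par G hT r x) r) := by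
  cases hpth : pth G hT x r with
  | nil => exact absurd rfl hx
  | @cons _ y _ h q =>
    have hq : q.IsPath := by
      have := pth_isPath G hT x r
      rw [hpth] at this
      exact this.of_cons
    have hpar : par G hT r x = y := by
      rw [par, hpth, SimpleGraph.Walk.getVert_cons _ _ one_ne_zero, Nat.sub_self, SimpleGraph.Walk.getVert_zero]
    subst hpar
    exact ⟨h, by rw [← pth_eq G hT q hq]⟩

lemma par_adj (G : SimpleGraph V) (hT : G.IsTree) {x r : V} (hx : x ≠ r) :
    G.Adj x (par G hT r x) :=
  (pth_eq_cons G hT hx).choose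

lemma pth_length_par (G : SimpleGraph V) (hT : G.IsTree) {x r : V} (hx : x ≠ r) :
    (pth G hT (par G hT r x) r).length + 1 = (pth G hT x r).length := by
  obtain ⟨h, hc⟩ := pth_eq_cons G hT hx
  rw [hc, SimpleGraph.Walk.length_cons]

lemma par_adj_cases (G : SimpleGraph V) (hT : G.IsTree) (r : V) {x y : V} (hxy : G.Adj x y) :
    y = par G hT r x ∨ x = par G hT r y := by
  by_cases hy : y ∈ (pth G hT x r).support
  · left
    have h1 : (Walk.cons hxy Walk.nil : G.Walk x y).IsPath := by
      simp [Walk.cons_isPath_iff, hxy.ne]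
    have h2 : ((pth G hT x r).takeUntil y hy).IsPath := (pth_isPath G hT x r).takeUntil hy
    have h3 : (pth G hT x r).takeUntil y hy = Walk.cons hxy Walk.nil := by
      have := hT.2.path_unique ⟨_, h2⟩ ⟨_, h1⟩
      exact congrArg Subtype.val this
    have h4 := (pth G hT x r).take_spec hy
    rw [h3] at h4
    rw [par, ← h4]
    simp [Walk.getVert_cons_succ, Walk.getVert_zero]
  · right
    have h1 : (Walk.cons hxy.symm (pth G hT x r)).IsPath :=
      (pth_isPath G hT x r).cons hy
    have h2 := pth_eq G hT _ h1
    rw [par, ← h2, SimpleGraph.Walk.getVert_cons _ _ one_ne_zero, Nat.sub_self, SimpleGraph.Walk.getVert_zero]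

section PWalk

variable {n : ℕ} {G : SimpleGraph V} {v : Fin n → V}
  (hadj : ∀ (i : ℕ) (h : i + 1 < n), G.Adj (v ⟨i, Nat.lt_of_succ_lt h⟩) (v ⟨i + 1, h⟩))

noncomputable def pWalk : (d j : ℕ) → (h : j + d < n) → G.Walk (v ⟨j, by omega⟩) (v ⟨j + d, h⟩)
  | 0, _, _ => Walk.nil
  | d + 1, j, h =>
    Walk.cons (hadj j (by omega))
      ((pWalk d (j + 1) (by omega)).copy rfl (congrArg v (Fin.ext (show j + 1 + d = j + (d + 1) by omega))))

lemma pWalk_support (d j : ℕ) (h : j + d < n) :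
    ∀ x ∈ (pWalk hadj d j h).support, ∃ i, j ≤ i ∧ i ≤ j + d ∧ ∃ hi : i < n, x = v ⟨i, hi⟩ := by
  induction d generalizing j with
  | zero =>
    intro x hx
    rw [pWalk] at hx
    simp only [Walk.support_nil, List.mem_singleton] at hx
    exact ⟨j, le_refl _, by omega, by omega, hx⟩
  | succ d ih =>
    intro x hx
    rw [pWalk] at hx
    simp only [Walk.support_cons, Walk.support_copy, List.mem_cons] at hx
    rcases hx with hx | hx
    · exact ⟨j, le_refl _, by omega, by omega, hx⟩
    · obtain ⟨i, h1, h2, hi, hx⟩ := ih (j + 1) (by omega) x hx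
      exact ⟨i, by omega, by omega, hi, hx⟩

lemma pWalk_length (d j : ℕ) (h : j + d < n) : (pWalk hadj d j h).length = d := by
  induction d generalizing j with
  | zero => rw [pWalk]; rfl
  | succ d ih => rw [pWalk]; simp [Walk.length_copy, ih]

lemma pWalk_isPath (hinj : Function.Injective v) (d j : ℕ) (h : j + d < n) :
    (pWalk hadj d j h).IsPath := by
  induction d generalizing j with
  | zero => rw [pWalk]; exact Walk.IsPath.nil
  | succ d ih =>
    rw [pWalk]
    rw [Walk.cons_isPath_iff]
    refine ⟨(Walk.isPath_copy _ _ _).2 (ih (j + 1) (by omega)), ?_⟩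
    intro hmem
    rw [Walk.support_copy] at hmem
    obtain ⟨i, h1, h2, hi, hx⟩ := pWalk_support hadj d (j + 1) (by omega) _ hmem
    have h5 : (⟨j, by omega⟩ : Fin n) = ⟨i, hi⟩ := hinj hx
    have h6 : j = i := congrArg Fin.val h5
    omega

lemma pWalk_getVert_one (d j : ℕ) (hd : 0 < d) (h : j + d < n) :
    (pWalk hadj d j h).getVert 1 = v ⟨j + 1, by omega⟩ := by
  cases d with
  | zero => omega
  | succ d =>
    rw [pWalk, SimpleGraph.Walk.getVert_cons _ _ one_ne_zero, Nat.sub_self, SimpleGraph.Walk.getVert_zero]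

end PWalk

section RootD

variable (G : SimpleGraph V) (hT : G.IsTree) (r : V) (P : Set V) (hr : r ∈ P)

noncomputable def rootD (x : V) : V × V × ℕ :=
  if hx : x ∈ P then (x, x, 0)
  else
    have hxr : x ≠ r := fun h => hx (h ▸ hr)
    if par G hT r x ∈ P then (par G hT r x, x, 1)
    else
      have : (pth G hT (par G hT r x) r).length < (pth G hT x r).length := by
        have := pth_length_par G hT hxr
        omega
      ((rootD (par G hT r x)).1, (rootD (par G hT r x)).2.1, (rootD (par G hT r x)).2.2 + 1)
termination_by (pth G hT x r).length

lemma rootD_mem {x : V} (hx : x ∈ P) : rootD G hT r P hr x = (x, x, 0) := by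
  rw [rootD]; simp [hx]

lemma rootD_one {x : V} (hx : x ∉ P) (hy : par G hT r x ∈ P) :
    rootD G hT r P hr x = (par G hT r x, x, 1) := by
  unfold rootD; simp [hx, hy]

lemma rootD_two {x : V} (hx : x ∉ P) (hy : par G hT r x ∉ P) :
    rootD G hT r P hr x = ((rootD G hT r P hr (par G hT r x)).1,
      (rootD G hT r P hr (par G hT r x)).2.1, (rootD G hT r P hr (par G hT r x)).2.2 + 1) := by
  conv_lhs => rw [rootD.eq_def]
  simp [hx, hy]

end RootD

section RootSpec

variable (G : SimpleGraph V) (hT : G.IsTree) (r : V) (P : Set V) (hr : r ∈ P)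

lemma rootD_spec_aux : ∀ (N : ℕ) (x : V), (pth G hT x r).length ≤ N → x ∉ P →
    (rootD G hT r P hr x).1 ∈ P ∧
    (rootD G hT r P hr x).2.1 ∉ P ∧
    G.Adj (rootD G hT r P hr x).2.1 (rootD G hT r P hr x).1 ∧
    1 ≤ (rootD G hT r P hr x).2.2 ∧
    rootD G hT r P hr (rootD G hT r P hr x).2.1
      = ((rootD G hT r P hr x).1, (rootD G hT r P hr x).2.1, 1) ∧
    ((rootD G hT r P hr x).2.2 = 1 → (rootD G hT r P hr x).2.1 = x ∧
      (rootD G hT r P hr x).1 = par G hT r x) ∧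
    (2 ≤ (rootD G hT r P hr x).2.2 → ∃ z, z ∉ P ∧ G.Adj (rootD G hT r P hr x).2.1 z) := by
  intro N
  induction N with
  | zero =>
    intro x hlen hx
    have hxr : x ≠ r := fun h => hx (h ▸ hr)
    have := pth_length_par G hT hxr
    omega
  | succ N ih =>
    intro x hlen hx
    have hxr : x ≠ r := fun h => hx (h ▸ hr)
    by_cases hy : par G hT r x ∈ P
    · rw [rootD_one G hT r P hr hx hy]
      dsimp only
      refine ⟨hy, hx, par_adj G hT hxr, le_refl _, rootD_one G hT r P hr hx hy,
        fun _ => ⟨rfl, rfl⟩, fun h2 => by omega⟩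
    · have hlen2 : (pth G hT (par G hT r x) r).length ≤ N := by
        have := pth_length_par G hT hxr
        omega
      obtain ⟨ih1, ih2, ih3, ih4, ih5, ih6, ih7⟩ := ih (par G hT r x) hlen2 hy
      rw [rootD_two G hT r P hr hx hy]
      dsimp only
      refine ⟨ih1, ih2, ih3, by omega, ih5, fun h1 => by omega, fun _ => ?_⟩
      by_cases ht1 : (rootD G hT r P hr (par G hT r x)).2.2 = 1
      · obtain ⟨he, _⟩ := ih6 ht1
        exact ⟨x, hx, by rw [he]; exact (par_adj G hT hxr).symm⟩
      · exact ih7 (by omega)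

lemma rootD_spec {x : V} (hx : x ∉ P) :
    (rootD G hT r P hr x).1 ∈ P ∧
    (rootD G hT r P hr x).2.1 ∉ P ∧
    G.Adj (rootD G hT r P hr x).2.1 (rootD G hT r P hr x).1 ∧
    1 ≤ (rootD G hT r P hr x).2.2 ∧
    rootD G hT r P hr (rootD G hT r P hr x).2.1
      = ((rootD G hT r P hr x).1, (rootD G hT r P hr x).2.1, 1) ∧
    ((rootD G hT r P hr x).2.2 = 1 → (rootD G hT r P hr x).2.1 = x ∧
      (rootD G hT r P hr x).1 = par G hT r x) ∧
    (2 ≤ (rootD G hT r P hr x).2.2 → ∃ z, z ∉ P ∧ G.Adj (rootD G hT r P hr x).2.1 z) :=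
  rootD_spec_aux G hT r P hr _ x le_rfl hx

end RootSpec

lemma dyn_pm [Fintype V] (G : SimpleGraph V) (σ : V → ℤ) (h : PM σ) (t : ℕ) (x : V) :
    dyn G σ t x = 1 ∨ dyn G σ t x = -1 := by
  cases t with
  | zero => exact h x
  | succ t => rw [dyn_succ]; split <;> simp

lemma degree'_eq [Fintype V] (G : SimpleGraph V) (x : V) :
    degree' G x = (G.neighborFinset x).card := by
  rw [degree', neighborFinset_def, Set.ncard_eq_toFinset_card']

lemma dyn_zero (G : SimpleGraph V) (σ : V → ℤ) (x : V) : dyn G σ 0 x = σ x := rfl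

/-- For a path `Q = v_0 … v_{n-1}` (indexed from 0) in a tree with odd
degrees such that at most `(deg - 1)/2` neighbours of the last vertex are leaves and
strictly fewer than `(deg - 1)/2` neighbours of every other path vertex are leaves, there
is an initial opinion assignment so that `ξ_{i+2}(v_i) = -1` while `ξ_t(v_i) = 1` for
all `t ≤ i + 1` (this is the paper's claim `ξ_{i+1}(v_i) = -1`, `ξ_t(v_i) = 1` for
`t ≤ i` with 1-based indexing). -/
theorem exists_travelling_assignment [Fintype V] (G : SimpleGraph V) (hT : G.IsTree)
    (hodd : OddDegrees G) (n : ℕ) (hn : 0 < n) (v : Fin n → V)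
    (hinj : Function.Injective v)
    (hadj : ∀ (i : ℕ) (h : i + 1 < n),
      G.Adj (v ⟨i, by omega⟩) (v ⟨i + 1, h⟩))
    (hlast : 2 * leafNbrs G (v ⟨n - 1, by omega⟩) ≤ degree' G (v ⟨n - 1, by omega⟩) - 1)
    (hmid : ∀ i : Fin n, (i : ℕ) < n - 1 → 2 * leafNbrs G (v i) < degree' G (v i) - 1) :
    ∃ σ : V → ℤ, PM σ ∧ ∀ i : Fin n,
      dyn G σ ((i : ℕ) + 2) (v i) = -1 ∧ ∀ t ≤ (i : ℕ) + 1, dyn G σ t (v i) = 1 := by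
  classical
  set P : Set V := Set.range v with hPdef
  set r : V := v ⟨n - 1, by omega⟩ with hrdef
  have hrmem : r ∈ P := ⟨⟨n - 1, by omega⟩, by rw [hrdef]⟩
  -- membership in P
  have hvP : ∀ k : Fin n, v k ∈ P := fun k => ⟨k, rfl⟩
  -- parent of a nonpath vertex adjacent to a path vertex is that path vertex
  have hpar_eq : ∀ x, x ∉ P → ∀ k : Fin n, G.Adj x (v k) → par G hT r x = v k := by
    intro x hx k hxy
    rcases par_adj_cases G hT r hxy with h | h
    · exact h.symm
    · exfalso
      by_cases hk : (k : ℕ) = n - 1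
      · have hvk : v k = r := by rw [hrdef]; exact congrArg v (Fin.ext (by simpa using hk))
        have hnil : (Walk.nil : G.Walk r r) = pth G hT r r := pth_eq G hT _ Walk.IsPath.nil
        have hprr : par G hT r r = r := by rw [par, ← hnil]; rfl
        rw [hvk, hprr] at h
        exact hx (h ▸ hrmem)
      · have hlt : (k : ℕ) + 1 < n := by have := k.isLt; omega
        set W : G.Walk (v k) r :=
          (pWalk hadj (n - 1 - (k : ℕ)) (k : ℕ) (by have := k.isLt; omega)).copy
            (congrArg v (Fin.ext rfl))
            (by rw [hrdef]; exact congrArg v (Fin.ext (by have := k.isLt; simp; omega))) with hWdef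
        have hWp : W.IsPath := by
          rw [hWdef, Walk.isPath_copy]
          exact pWalk_isPath hadj hinj _ _ _
        have hWeq : W = pth G hT (v k) r := pth_eq G hT W hWp
        have hg : par G hT r (v k) = v ⟨(k : ℕ) + 1, hlt⟩ := by
          rw [par, ← hWeq, hWdef, Walk.getVert_copy]
          exact pWalk_getVert_one hadj _ _ (by have := k.isLt; omega) _
        rw [hg] at h
        exact hx (h ▸ hvP ⟨(k : ℕ) + 1, hlt⟩)
  -- no chords
  have hchord : ∀ j k : Fin n, G.Adj (v j) (v k) → (k : ℕ) = (j : ℕ) + 1 ∨ (j : ℕ) = (k : ℕ) + 1 := by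
    have aux : ∀ j k : Fin n, (j : ℕ) < (k : ℕ) → G.Adj (v j) (v k) → (k : ℕ) = (j : ℕ) + 1 := by
      intro j k hlt hjk
      have hkn := k.isLt
      set W : G.Walk (v j) (v k) :=
        (pWalk hadj ((k : ℕ) - (j : ℕ)) (j : ℕ) (by omega)).copy
          (congrArg v (Fin.ext rfl)) (congrArg v (Fin.ext (by simp; omega))) with hWdef
      have hWp : W.IsPath := by
        rw [hWdef, Walk.isPath_copy]
        exact pWalk_isPath hadj hinj _ _ _
      have h2 : (Walk.cons hjk Walk.nil).IsPath := by
        rw [Walk.cons_isPath_iff]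
        exact ⟨Walk.IsPath.nil, by simp [hjk.ne]⟩
      have := hT.2.path_unique ⟨W, hWp⟩ ⟨_, h2⟩
      have hlen := congrArg (fun q : G.Path (v j) (v k) => q.1.length) this
      simp only [hWdef, Walk.length_copy, pWalk_length, Walk.length_cons, Walk.length_nil] at hlen
      omega
    intro j k hjk
    rcases lt_trichotomy (j : ℕ) (k : ℕ) with h | h | h
    · exact Or.inl (aux j k h hjk)
    · exact absurd (congrArg v (Fin.ext h)) (fun he => hjk.ne he)
    · exact Or.inr (aux k j h hjk.symm)
  -- rootD of a neighbour of a path vertex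
  have hrootnbr : ∀ x, x ∉ P → ∀ k : Fin n, G.Adj x (v k) →
      rootD G hT r P hrmem x = (v k, x, 1) := by
    intro x hx k hxy
    have hp := hpar_eq x hx k hxy
    have hpP : par G hT r x ∈ P := by rw [hp]; exact hvP k
    rw [rootD_one G hT r P hrmem hx hpP, hp]
  -- oscillator structure of neighbours
  have hosc_nbr : ∀ x y, x ∉ P → y ∉ P → G.Adj x y →
      (rootD G hT r P hrmem x).1 = (rootD G hT r P hrmem y).1 ∧
      (rootD G hT r P hrmem x).2.1 = (rootD G hT r P hrmem y).2.1 ∧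
      ((rootD G hT r P hrmem x).2.2 = (rootD G hT r P hrmem y).2.2 + 1 ∨
        (rootD G hT r P hrmem y).2.2 = (rootD G hT r P hrmem x).2.2 + 1) := by
    intro x y hx hy hxy
    rcases par_adj_cases G hT r hxy with h | h
    · have h2 := rootD_two G hT r P hrmem hx (by rw [← h]; exact hy)
      rw [← h] at h2
      rw [h2]
      exact ⟨rfl, rfl, Or.inl rfl⟩
    · have h2 := rootD_two G hT r P hrmem hy (by rw [← h]; exact hx)
      rw [← h] at h2
      rw [h2]
      exact ⟨rfl, rfl, Or.inr rfl⟩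
  -- finset classes at each path vertex
  set NF : Fin n → Finset V := fun j => G.neighborFinset (v j) with hNF
  set Pf : Fin n → Finset V := fun j => (NF j).filter (fun y => y ∈ P) with hPf
  set Qf : Fin n → Finset V := fun j => (NF j).filter (fun y => ¬ y ∈ P) with hQf
  set Lf : Fin n → Finset V := fun j => (Qf j).filter (fun y => IsLeaf G y) with hLf
  set Kf : Fin n → Finset V := fun j => (Qf j).filter (fun y => ¬ IsLeaf G y) with hKf
  have hsplit : ∀ (j : Fin n) (f : V → ℤ),
      ∑ y ∈ NF j, f y = ((∑ y ∈ Pf j, f y + ∑ y ∈ Lf j, f y) + ∑ y ∈ Kf j, f y) := by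
    intro j f
    have e1 := Finset.sum_filter_add_sum_filter_not (NF j) (fun y => y ∈ P) f
    have e2 := Finset.sum_filter_add_sum_filter_not (Qf j) (fun y => IsLeaf G y) f
    simp only [hPf, hQf, hLf, hKf] at *
    linarith
  have hcard : ∀ j : Fin n, (Pf j).card + ((Lf j).card + (Kf j).card) = degree' G (v j) := by
    intro j
    rw [degree'_eq]
    have e1 := Finset.card_filter_add_card_filter_not (s := NF j) (p := fun y => y ∈ P)
    have e2 := Finset.card_filter_add_card_filter_not (s := Qf j)
      (p := fun y => IsLeaf G y)
    simp only [hPf, hQf, hLf, hKf, hNF] at *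
    omega
  have hL'le : ∀ j : Fin n, (Lf j).card ≤ leafNbrs G (v j) := by
    intro j
    have hset : {u | G.Adj (v j) u ∧ IsLeaf G u} =
        ↑((NF j).filter (fun u => IsLeaf G u)) := by
      ext u
      simp [hNF, SimpleGraph.mem_neighborFinset]
    rw [leafNbrs, hset, Set.ncard_coe_finset]
    apply Finset.card_le_card
    intro u hu
    rw [hLf, Finset.mem_filter] at hu
    rw [Finset.mem_filter]
    rw [hQf, Finset.mem_filter] at hu
    exact ⟨hu.1.1, hu.2⟩
  -- members of Lf and Kf
  have hmemQ : ∀ (j : Fin n) (u : V), u ∈ Qf j → u ∉ P ∧ G.Adj (v j) u ∧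
      rootD G hT r P hrmem u = (v j, u, 1) := by
    intro j u hu
    rw [hQf, Finset.mem_filter, hNF, SimpleGraph.mem_neighborFinset] at hu
    exact ⟨hu.2, hu.1, hrootnbr u hu.2 j hu.1.symm⟩
  -- the target surplus a(j)
  set aN : Fin n → ℕ := fun j => if n = 1 then (Lf j).card + 1 else if (j : ℕ) = 0 then
    (Lf j).card + 2 else if (j : ℕ) = n - 1 then (Lf j).card else (Lf j).card + 1 with haN
  -- regimes
  have regime : ∀ j : Fin n, (n = 1 ∧ (j : ℕ) = 0) ∨ (2 ≤ n ∧ (j : ℕ) = 0) ∨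
      (1 ≤ (j : ℕ) ∧ (j : ℕ) = n - 1) ∨ (1 ≤ (j : ℕ) ∧ (j : ℕ) < n - 1) := by
    intro j
    have := j.isLt
    omega
  -- explicit description of path-neighbours
  have hPfmem : ∀ (j : Fin n) (y : V), y ∈ Pf j ↔ (G.Adj (v j) y ∧ y ∈ P) := by
    intro j y
    rw [hPf, Finset.mem_filter, hNF, SimpleGraph.mem_neighborFinset]
  have hPfS : n = 1 → ∀ j : Fin n, Pf j = ∅ := by
    intro h1 j
    ext y
    simp only [Finset.notMem_empty, iff_false]
    intro hy
    obtain ⟨hadjy, hyP⟩ := (hPfmem j y).1 hy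
    obtain ⟨kk, hkk⟩ := hyP
    rcases hchord j kk (hkk ▸ hadjy) with h | h <;> · have := kk.isLt; have := j.isLt; omega
  have hPf0 : ∀ (h2 : 2 ≤ n) (j : Fin n), (j : ℕ) = 0 → Pf j = {v ⟨1, by omega⟩} := by
    intro h2 j hj0
    ext y
    rw [hPfmem, Finset.mem_singleton]
    constructor
    · rintro ⟨hadjy, kk, hkk⟩
      rcases hchord j kk (hkk ▸ hadjy) with h | h
      · rw [← hkk]; exact (congrArg v (Fin.ext (show (1:ℕ) = (kk:ℕ) by omega))).symm
      · omega
    · intro hy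
      subst hy
      refine ⟨?_, hvP _⟩
      have := hadj 0 (by omega)
      have hj : (⟨0, by omega⟩ : Fin n) = j := Fin.ext (show (0:ℕ) = (j:ℕ) by omega)
      rw [hj] at this
      exact this
  have hPfL : ∀ (h2 : 2 ≤ n) (j : Fin n) (hj1 : 1 ≤ (j : ℕ)) (hjl : (j : ℕ) = n - 1),
      Pf j = {v ⟨(j : ℕ) - 1, by have := j.isLt; omega⟩} := by
    intro h2 j hj1 hjl
    ext y
    rw [hPfmem, Finset.mem_singleton]
    constructor
    · rintro ⟨hadjy, kk, hkk⟩
      rcases hchord j kk (hkk ▸ hadjy) with h | h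
      · have := kk.isLt; omega
      · rw [← hkk]; exact (congrArg v (Fin.ext (show (j:ℕ) - 1 = (kk:ℕ) by omega))).symm
    · intro hy
      subst hy
      refine ⟨?_, hvP _⟩
      have := hadj ((j : ℕ) - 1) (by omega)
      have hj : (⟨(j : ℕ) - 1 + 1, by omega⟩ : Fin n) = j :=
        Fin.ext (show (j:ℕ) - 1 + 1 = (j:ℕ) by omega)
      rw [hj] at this
      exact this.symm
  have hPfM : ∀ (j : Fin n) (hj1 : 1 ≤ (j : ℕ)) (hjl : (j : ℕ) < n - 1),
      Pf j = {v ⟨(j : ℕ) - 1, by have := j.isLt; omega⟩, v ⟨(j : ℕ) + 1, by omega⟩} := by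
    intro j hj1 hjl
    ext y
    rw [hPfmem, Finset.mem_insert, Finset.mem_singleton]
    constructor
    · rintro ⟨hadjy, kk, hkk⟩
      rcases hchord j kk (hkk ▸ hadjy) with h | h
      · right; rw [← hkk]; exact (congrArg v (Fin.ext (show (j:ℕ) + 1 = (kk:ℕ) by omega))).symm
      · left; rw [← hkk]; exact (congrArg v (Fin.ext (show (j:ℕ) - 1 = (kk:ℕ) by omega))).symm
    · intro hy
      rcases hy with hy | hy <;> subst hy
      · refine ⟨?_, hvP _⟩
        have := hadj ((j : ℕ) - 1) (by omega)
        have hj : (⟨(j : ℕ) - 1 + 1, by omega⟩ : Fin n) = j :=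
          Fin.ext (show (j:ℕ) - 1 + 1 = (j:ℕ) by omega)
        rw [hj] at this
        exact this.symm
      · refine ⟨?_, hvP _⟩
        have := hadj (j : ℕ) (by omega)
        have hj : (⟨(j : ℕ), by omega⟩ : Fin n) = j := Fin.ext rfl
        rw [hj] at this
        exact this
  -- counting: surplus is achievable
  have hak : ∀ j : Fin n, aN j ≤ (Kf j).card ∧ ((Kf j).card + aN j) % 2 = 0 := by
    intro j
    obtain ⟨m0, hm0⟩ := hodd (v j)
    have hc := hcard j
    have hle := hL'le j
    rcases regime j with ⟨h1, h0⟩ | ⟨h2, h0⟩ | ⟨h1, hl⟩ | ⟨h1, hl⟩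
    · have hrj : r = v j := by rw [hrdef]; exact congrArg v (Fin.ext (by simp; omega))
      rw [hPfS h1 j] at hc
      simp only [Finset.card_empty] at hc
      rw [hrj] at hlast
      have haNj : aN j = (Lf j).card + 1 := by simp only [haN]; split_ifs <;> omega
      omega
    · have hmidj := hmid j (by omega)
      rw [hPf0 h2 j h0] at hc
      simp only [Finset.card_singleton] at hc
      have haNj : aN j = (Lf j).card + 2 := by simp only [haN]; split_ifs <;> omega
      omega
    · have h2n : 2 ≤ n := by have := j.isLt; omega
      have hrj : r = v j := by rw [hrdef]; exact congrArg v (Fin.ext (by simp; omega))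
      rw [hPfL h2n j h1 hl] at hc
      simp only [Finset.card_singleton] at hc
      rw [hrj] at hlast
      have haNj : aN j = (Lf j).card := by simp only [haN]; split_ifs <;> omega
      omega
    · have hmidj := hmid j (by omega)
      rw [hPfM j h1 hl] at hc
      have hne : v ⟨(j : ℕ) - 1, by have := j.isLt; omega⟩ ≠ v ⟨(j : ℕ) + 1, by omega⟩ := by
        intro h
        have h5 := congrArg Fin.val (hinj h)
        simp only [Fin.val_mk] at h5
        omega
      rw [Finset.card_pair hne] at hc
      have haNj : aN j = (Lf j).card + 1 := by simp only [haN]; split_ifs <;> omega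
      omega
  -- choose phases
  have hchoice : ∀ j : Fin n, ∃ S, S ⊆ Kf j ∧
      2 * ((S.card : ℤ)) = ((Kf j).card : ℤ) + (-1) ^ (j : ℕ) * (aN j : ℤ) := by
    intro j
    obtain ⟨ha, hp⟩ := hak j
    rcases Nat.even_or_odd (j : ℕ) with he | ho
    · obtain ⟨S, hS1, hS2⟩ := Finset.exists_subset_card_eq
        (n := ((Kf j).card + aN j) / 2) (s := Kf j) (by omega)
      refine ⟨S, hS1, ?_⟩
      rw [Even.neg_one_pow he, hS2, one_mul]
      omega
    · obtain ⟨S, hS1, hS2⟩ := Finset.exists_subset_card_eq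
        (n := ((Kf j).card - aN j) / 2) (s := Kf j) (by omega)
      refine ⟨S, hS1, ?_⟩
      rw [Odd.neg_one_pow ho, hS2, neg_one_mul]
      have hjodd := Nat.odd_iff.1 ho
      omega
  choose Sf hSf using hchoice
  set ε : V → ℤ := fun u => if ∃ j : Fin n, u ∈ Sf j then 1 else -1 with hε
  have hKmem : ∀ (j : Fin n) (u : V), u ∈ Kf j → u ∉ P ∧ ¬IsLeaf G u ∧ G.Adj (v j) u ∧
      rootD G hT r P hrmem u = (v j, u, 1) := by
    intro j u hu
    simp only [hKf] at hu
    obtain ⟨huQ, hul⟩ := Finset.mem_filter.1 hu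
    obtain ⟨h1, h2, h3⟩ := hmemQ j u huQ
    exact ⟨h1, hul, h2, h3⟩
  have hKdisj : ∀ (i j : Fin n) (u : V), u ∈ Kf i → u ∈ Kf j → i = j := by
    intro i j u hi hj
    obtain ⟨h1, _, h2, _⟩ := hKmem i u hi
    obtain ⟨_, _, h4, _⟩ := hKmem j u hj
    exact hinj ((hpar_eq u h1 i h2.symm).symm.trans (hpar_eq u h1 j h4.symm))
  have hsumε : ∀ j : Fin n, ∑ u ∈ Kf j, ε u = (-1) ^ (j : ℕ) * (aN j : ℤ) := by
    intro j
    have h1 : ∀ u ∈ Kf j, ε u = if u ∈ Sf j then 1 else -1 := by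
      intro u hu
      simp only [hε]
      by_cases hus : u ∈ Sf j
      · rw [if_pos ⟨j, hus⟩, if_pos hus]
      · rw [if_neg, if_neg hus]
        rintro ⟨i, hi⟩
        exact hus ((hKdisj i j u ((hSf i).1 hi) hu) ▸ hi)
    rw [Finset.sum_congr rfl h1, Finset.sum_ite, Finset.sum_const, Finset.sum_const]
    have hfe : (Kf j).filter (fun u => u ∈ Sf j) = Sf j := by
      ext u
      rw [Finset.mem_filter]
      exact ⟨And.right, fun hu => ⟨(hSf j).1 hu, hu⟩⟩
    have hfc := Finset.card_filter_add_card_filter_not (s := Kf j)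
      (p := fun u => u ∈ Sf j)
    rw [hfe] at hfc ⊢
    have hfcz : ((Sf j).card : ℤ) + (((Kf j).filter (fun u => ¬ u ∈ Sf j)).card : ℤ)
        = ((Kf j).card : ℤ) := by exact_mod_cast hfc
    simp only [nsmul_eq_mul, mul_one, mul_neg_one]
    linarith [(hSf j).2]
  -- the initial assignment
  set σf : V → ℤ := fun x => if x ∈ P then 1 else if IsLeaf G ((rootD G hT r P hrmem x).2.1) then 1
    else ε ((rootD G hT r P hrmem x).2.1) * (-1) ^ ((rootD G hT r P hrmem x).2.2 + 1) with hσf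
  have hεpm : ∀ u, ε u = 1 ∨ ε u = -1 := by
    intro u
    simp only [hε]
    split_ifs <;> simp
  have hPM : PM σf := by
    intro x
    simp only [hσf]
    split_ifs with h1 h2
    · exact Or.inl rfl
    · exact Or.inl rfl
    · rcases neg_one_pow_eq_or ℤ ((rootD G hT r P hrmem x).2.2 + 1) with h | h <;>
        rcases hεpm ((rootD G hT r P hrmem x).2.1) with h2 | h2 <;> rw [h, h2] <;> norm_num
  have hσP : ∀ k : Fin n, σf (v k) = 1 := by
    intro k
    simp only [hσf]
    rw [if_pos (hvP k)]
  have hσleaf : ∀ x, x ∉ P → IsLeaf G ((rootD G hT r P hrmem x).2.1) → σf x = 1 := by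
    intro x hx hl
    simp only [hσf]
    rw [if_neg hx, if_pos hl]
  have hσosc : ∀ x, x ∉ P → ¬IsLeaf G ((rootD G hT r P hrmem x).2.1) →
      σf x = ε ((rootD G hT r P hrmem x).2.1) * (-1) ^ ((rootD G hT r P hrmem x).2.2 + 1) := by
    intro x hx hl
    simp only [hσf]
    rw [if_neg hx, if_neg hl]
  -- leaves attached to the path
  have hleafroot : ∀ x, x ∉ P → IsLeaf G ((rootD G hT r P hrmem x).2.1) →
      ((rootD G hT r P hrmem x).2.1 = x ∧ (rootD G hT r P hrmem x).2.2 = 1) ∧ IsLeaf G x := by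
    intro x hx hl
    obtain ⟨s1, s2, s3, s4, s5, s6, s7⟩ := rootD_spec G hT r P hrmem hx
    have ht1 : (rootD G hT r P hrmem x).2.2 = 1 := by
      by_contra hne
      obtain ⟨z, hz1, hz2⟩ := s7 (by omega)
      have hzm : z ≠ (rootD G hT r P hrmem x).1 := fun h => hz1 (h ▸ s1)
      have hsub : ({z, (rootD G hT r P hrmem x).1} : Finset V) ⊆ G.neighborFinset ((rootD G hT r P hrmem x).2.1) := by
        intro y hy
        rcases Finset.mem_insert.1 hy with hy | hy
        · subst hy; rw [SimpleGraph.mem_neighborFinset]; exact hz2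
        · rw [Finset.mem_singleton.1 hy, SimpleGraph.mem_neighborFinset]; exact s3
      have h2 : 2 ≤ (G.neighborFinset ((rootD G hT r P hrmem x).2.1)).card :=
        le_trans (le_of_eq (Finset.card_pair hzm).symm) (Finset.card_le_card hsub)
      rw [IsLeaf, degree'_eq] at hl
      omega
    obtain ⟨he1, _⟩ := s6 ht1
    exact ⟨⟨he1, ht1⟩, he1 ▸ hl⟩
  -- sign-flip helper
  have hpowflip : ∀ a b : ℕ, (a = b + 1 ∨ b = a + 1) →
      ((-1 : ℤ)) ^ (a + 1) = -((-1 : ℤ)) ^ (b + 1) := by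
    intro a b h
    rcases h with rfl | rfl <;> simp [pow_succ] <;> ring
  -- the main induction on time
  have main : ∀ s : ℕ,
      (∀ (j : ℕ) (hj : j < n), (s ≤ j + 1 → dyn G σf s (v ⟨j, hj⟩) = 1) ∧
        (s = j + 2 → dyn G σf s (v ⟨j, hj⟩) = -1)) ∧
      (∀ x, x ∉ P → IsLeaf G ((rootD G hT r P hrmem x).2.1) → ∀ k : Fin n,
        (rootD G hT r P hrmem x).1 = v k → s ≤ (k : ℕ) + 2 → dyn G σf s x = 1) ∧
      (∀ x, x ∉ P → ¬IsLeaf G ((rootD G hT r P hrmem x).2.1) → dyn G σf s x = (-1) ^ s * σf x) := by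
    intro s
    induction s with
    | zero =>
      refine ⟨fun j hj => ⟨fun _ => ?_, fun h => by omega⟩,
        fun x hx hl k hmk hs => ?_, fun x hx hl => ?_⟩
      · rw [dyn_zero]; exact hσP ⟨j, hj⟩
      · rw [dyn_zero]; exact hσleaf x hx hl
      · rw [dyn_zero, pow_zero, one_mul]
    | succ s ih =>
      obtain ⟨IH1, IH2, IH3⟩ := ih
      have osc : ∀ x, x ∉ P → ¬IsLeaf G ((rootD G hT r P hrmem x).2.1) →
          dyn G σf (s + 1) x = (-1) ^ (s + 1) * σf x := by
        intro x hx hnl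
        obtain ⟨s1, s2, s3, s4, s5, s6, s7⟩ := rootD_spec G hT r P hrmem hx
        have hwv : (-1 : ℤ) ^ s * σf x = 1 ∨ (-1 : ℤ) ^ s * σf x = -1 := by
          rcases neg_one_pow_eq_or ℤ s with h | h <;> rcases hPM x with h2 | h2 <;>
            rw [h, h2] <;> norm_num
        have hgoalval : (-1 : ℤ) ^ (s + 1) * σf x = -((-1 : ℤ) ^ s * σf x) := by
          rw [pow_succ]; ring
        have hoscval : ∀ y, y ∉ P → G.Adj x y →
            dyn G σf s y = -((-1 : ℤ) ^ s * σf x) := by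
          intro y hyP hadjxy
          obtain ⟨o1, o2, o3⟩ := hosc_nbr x y hx hyP hadjxy
          have hnly : ¬IsLeaf G ((rootD G hT r P hrmem y).2.1) := by rw [← o2]; exact hnl
          rw [IH3 y hyP hnly, hσosc y hyP hnly, ← o2, hσosc x hx hnl,
            hpowflip _ _ (Or.symm o3)]
          ring
        rw [dyn_succ, hgoalval]
        by_cases ht : (rootD G hT r P hrmem x).2.2 = 1
        · obtain ⟨hux, hmx⟩ := s6 ht
          have hadjm : G.Adj x ((rootD G hT r P hrmem x).1) := by
            have h' := s3; rw [hux] at h'; exact h'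
          have hmmem : (rootD G hT r P hrmem x).1 ∈ G.neighborFinset x := by
            rw [SimpleGraph.mem_neighborFinset]; exact hadjm
          have hvals : ∀ y ∈ (G.neighborFinset x).erase ((rootD G hT r P hrmem x).1),
              dyn G σf s y = -((-1 : ℤ) ^ s * σf x) := by
            intro y hy
            obtain ⟨hyne, hymem⟩ := Finset.mem_erase.1 hy
            have hadjxy : G.Adj x y := by
              rw [SimpleGraph.mem_neighborFinset] at hymem; exact hymem
            refine hoscval y ?_ hadjxy
            rintro ⟨k, hk⟩
            apply hyne
            have h5 := hrootnbr x hx k (hk ▸ hadjxy)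
            rw [h5]
            exact hk.symm
          have hnlx : ¬IsLeaf G x := by rw [hux] at hnl; exact hnl
          obtain ⟨m0, hm0⟩ := hodd x
          have hne1 : (G.neighborFinset x).card ≠ 1 := by
            intro h1; exact hnlx (by rw [IsLeaf, degree'_eq]; exact h1)
          rw [degree'_eq] at hm0
          have hd1 : 0 < (G.neighborFinset x).card := Finset.card_pos.2 ⟨_, hmmem⟩
          have hd3 : 3 ≤ (G.neighborFinset x).card := by omega
          rw [← Finset.add_sum_erase _ _ hmmem, Finset.sum_congr rfl hvals,
            Finset.sum_const, nsmul_eq_mul]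
          have hcarde : ((G.neighborFinset x).erase ((rootD G hT r P hrmem x).1)).card
              = (G.neighborFinset x).card - 1 := Finset.card_erase_of_mem hmmem
          have hdm := dyn_pm G σf hPM s ((rootD G hT r P hrmem x).1)
          rcases hwv with hw1 | hw1
          · rw [hw1]
            simp only [mul_neg_one]
            rw [if_neg (by rcases hdm with h | h <;> rw [h] <;> omega)]
          · rw [hw1]
            simp only [neg_neg, mul_one]
            rw [if_pos (by rcases hdm with h | h <;> rw [h] <;> omega)]
        · have hxr : x ≠ r := fun h => hx (h ▸ hrmem)
          have hpmem : par G hT r x ∈ G.neighborFinset x := by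
            rw [SimpleGraph.mem_neighborFinset]; exact par_adj G hT hxr
          have hvals : ∀ y ∈ G.neighborFinset x,
              dyn G σf s y = -((-1 : ℤ) ^ s * σf x) := by
            intro y hy
            have hadjxy : G.Adj x y := by
              rw [SimpleGraph.mem_neighborFinset] at hy; exact hy
            refine hoscval y ?_ hadjxy
            rintro ⟨k, hk⟩
            have h5 := hrootnbr x hx k (hk ▸ hadjxy)
            rw [h5] at ht
            exact ht rfl
          rw [Finset.sum_congr rfl hvals, Finset.sum_const, nsmul_eq_mul]
          have hd1 : 0 < (G.neighborFinset x).card := Finset.card_pos.2 ⟨_, hpmem⟩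
          rcases hwv with hw1 | hw1
          · rw [hw1]
            simp only [mul_neg_one]
            rw [if_neg (by omega)]
          · rw [hw1]
            simp only [neg_neg, mul_one]
            rw [if_pos (by omega)]
      have leafp : ∀ x, x ∉ P → IsLeaf G ((rootD G hT r P hrmem x).2.1) → ∀ k : Fin n,
          (rootD G hT r P hrmem x).1 = v k → s + 1 ≤ (k : ℕ) + 2 → dyn G σf (s + 1) x = 1 := by
        intro x hx hl k hmk hs
        obtain ⟨⟨he1, ht1⟩, hlx⟩ := hleafroot x hx hl
        obtain ⟨s1, s2, s3, s4, s5, s6, s7⟩ := rootD_spec G hT r P hrmem hx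
        have hadjm : G.Adj x ((rootD G hT r P hrmem x).1) := by
          have h' := s3; rw [he1] at h'; exact h'
        have hmmem : (rootD G hT r P hrmem x).1 ∈ G.neighborFinset x := by
          rw [SimpleGraph.mem_neighborFinset]; exact hadjm
        have hcard1 : (G.neighborFinset x).card = 1 := by rw [← degree'_eq]; exact hlx
        obtain ⟨a0, ha0⟩ := Finset.card_eq_one.1 hcard1
        have hma : (rootD G hT r P hrmem x).1 = a0 := by
          have h' := hmmem; rw [ha0, Finset.mem_singleton] at h'; exact h'
        rw [dyn_succ, ha0, ← hma, Finset.sum_singleton, hmk]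
        have hval := (IH1 (k : ℕ) k.isLt).1 (by omega)
        rw [Fin.eta] at hval
        rw [hval]
        norm_num
      have path : ∀ (j : ℕ) (hj : j < n),
          (s + 1 ≤ j + 1 → dyn G σf (s + 1) (v ⟨j, hj⟩) = 1) ∧
          (s + 1 = j + 2 → dyn G σf (s + 1) (v ⟨j, hj⟩) = -1) := by
        intro j hj
        have hTL : s ≤ j + 2 → ∑ u ∈ Lf ⟨j, hj⟩, dyn G σf s u = ((Lf ⟨j, hj⟩).card : ℤ) := by
          intro hs
          have hv1 : ∀ u ∈ Lf ⟨j, hj⟩, dyn G σf s u = 1 := by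
            intro u hu
            simp only [hLf] at hu
            obtain ⟨huQ, hul⟩ := Finset.mem_filter.1 hu
            obtain ⟨hu1, hu2, hu3⟩ := hmemQ _ u huQ
            have hul2 : IsLeaf G ((rootD G hT r P hrmem u).2.1) := by rw [hu3]; exact hul
            exact IH2 u hu1 hul2 ⟨j, hj⟩ (by rw [hu3]) hs
          rw [Finset.sum_congr rfl hv1, Finset.sum_const, nsmul_eq_mul, mul_one]
        have hTK : ∑ u ∈ Kf ⟨j, hj⟩, dyn G σf s u = (-1) ^ (s + j) * (aN ⟨j, hj⟩ : ℤ) := by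
          have hv1 : ∀ u ∈ Kf ⟨j, hj⟩, dyn G σf s u = (-1) ^ s * ε u := by
            intro u hu
            obtain ⟨hu1, hu2, hu3, hu4⟩ := hKmem _ u hu
            have hnlu : ¬IsLeaf G ((rootD G hT r P hrmem u).2.1) := by rw [hu4]; exact hu2
            rw [IH3 u hu1 hnlu, hσosc u hu1 hnlu, hu4]
            dsimp only
            norm_num
          rw [Finset.sum_congr rfl hv1, ← Finset.mul_sum, hsumε ⟨j, hj⟩, pow_add]
          have hjv : ((⟨j, hj⟩ : Fin n) : ℕ) = j := rfl
          rw [hjv]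
          ring
        refine ⟨fun hs1 => ?_, fun hs2 => ?_⟩
        · rw [dyn_succ]
          have hsp := hsplit ⟨j, hj⟩ (dyn G σf s)
          simp only [hNF] at hsp
          rw [hsp, hTL (by omega), hTK]
          rcases regime ⟨j, hj⟩ with ⟨h1, h0⟩ | ⟨h2, h0⟩ | ⟨h1, hl⟩ | ⟨h1, hl⟩
          · have h0' : j = 0 := h0
            have hs0 : s = 0 := by omega
            have haNj : aN ⟨j, hj⟩ = (Lf ⟨j, hj⟩).card + 1 := by
              simp only [haN, Fin.val_mk]; split_ifs <;> omega
            have hsign : (-1 : ℤ) ^ (s + j) = 1 := by rw [hs0, h0']; norm_num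
            rw [hPfS h1 _, Finset.sum_empty, hsign, haNj]
            split_ifs with hcond
            · rfl
            · exfalso; push_cast at hcond; omega
          · have h0' : j = 0 := h0
            have hs0 : s = 0 := by omega
            have haNj : aN ⟨j, hj⟩ = (Lf ⟨j, hj⟩).card + 2 := by
              simp only [haN, Fin.val_mk]; split_ifs <;> omega
            have hsign : (-1 : ℤ) ^ (s + j) = 1 := by rw [hs0, h0']; norm_num
            rw [hPf0 h2 _ h0, Finset.sum_singleton, hsign, haNj]
            have hval := (IH1 1 (by omega)).1 (by omega)
            rw [hval]
            split_ifs with hcond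
            · rfl
            · exfalso; push_cast at hcond; omega
          · have h1' : 1 ≤ j := h1
            have hl' : j = n - 1 := hl
            have haNj : aN ⟨j, hj⟩ = (Lf ⟨j, hj⟩).card := by
              simp only [haN, Fin.val_mk]; split_ifs <;> omega
            rw [hPfL (by omega) _ h1 hl, Finset.sum_singleton, haNj]
            have hval := (IH1 (j - 1) (by omega)).1 (by omega)
            rw [hval]
            rcases neg_one_pow_eq_or ℤ (s + j) with hsign | hsign <;> rw [hsign] <;>
              split_ifs with hcond <;>
              first
              | rfl
              | (exfalso; push_cast at hcond; omega)
          · have h1' : 1 ≤ j := h1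
            have hl' : j < n - 1 := hl
            have haNj : aN ⟨j, hj⟩ = (Lf ⟨j, hj⟩).card + 1 := by
              simp only [haN, Fin.val_mk]; split_ifs <;> omega
            have hne : v ⟨j - 1, by omega⟩ ≠ v ⟨j + 1, by omega⟩ := by
              intro h
              have h5 := congrArg Fin.val (hinj h)
              simp only [Fin.val_mk] at h5
              omega
            rw [hPfM _ h1 hl, Finset.sum_pair hne, haNj]
            have hval1 := (IH1 (j - 1) (by omega)).1 (by omega)
            have hval2 := (IH1 (j + 1) (by omega)).1 (by omega)
            rw [hval1, hval2]
            rcases neg_one_pow_eq_or ℤ (s + j) with hsign | hsign <;> rw [hsign] <;>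
              split_ifs with hcond <;>
              first
              | rfl
              | (exfalso; push_cast at hcond; omega)
        · rw [dyn_succ]
          have hsp := hsplit ⟨j, hj⟩ (dyn G σf s)
          simp only [hNF] at hsp
          rw [hsp, hTL (by omega), hTK]
          have hsign : (-1 : ℤ) ^ (s + j) = -1 := Odd.neg_one_pow ⟨j, by omega⟩
          rcases regime ⟨j, hj⟩ with ⟨h1, h0⟩ | ⟨h2, h0⟩ | ⟨h1, hl⟩ | ⟨h1, hl⟩
          · have h0' : j = 0 := h0
            have haNj : aN ⟨j, hj⟩ = (Lf ⟨j, hj⟩).card + 1 := by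
              simp only [haN, Fin.val_mk]; split_ifs <;> omega
            rw [hPfS h1 _, Finset.sum_empty, hsign, haNj]
            split_ifs with hcond
            · exfalso; push_cast at hcond; omega
            · rfl
          · have h0' : j = 0 := h0
            have haNj : aN ⟨j, hj⟩ = (Lf ⟨j, hj⟩).card + 2 := by
              simp only [haN, Fin.val_mk]; split_ifs <;> omega
            rw [hPf0 h2 _ h0, Finset.sum_singleton, hsign, haNj]
            have hval := (IH1 1 (by omega)).1 (by omega)
            rw [hval]
            split_ifs with hcond
            · exfalso; push_cast at hcond; omega
            · rfl
          · have h1' : 1 ≤ j := h1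
            have hl' : j = n - 1 := hl
            have haNj : aN ⟨j, hj⟩ = (Lf ⟨j, hj⟩).card := by
              simp only [haN, Fin.val_mk]; split_ifs <;> omega
            rw [hPfL (by omega) _ h1 hl, Finset.sum_singleton, haNj]
            have hval := (IH1 (j - 1) (by omega)).2 (by omega)
            rw [hval, hsign]
            split_ifs with hcond
            · exfalso; push_cast at hcond; omega
            · rfl
          · have h1' : 1 ≤ j := h1
            have hl' : j < n - 1 := hl
            have haNj : aN ⟨j, hj⟩ = (Lf ⟨j, hj⟩).card + 1 := by
              simp only [haN, Fin.val_mk]; split_ifs <;> omega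
            have hne : v ⟨j - 1, by omega⟩ ≠ v ⟨j + 1, by omega⟩ := by
              intro h
              have h5 := congrArg Fin.val (hinj h)
              simp only [Fin.val_mk] at h5
              omega
            rw [hPfM _ h1 hl, Finset.sum_pair hne, haNj]
            have hval1 := (IH1 (j - 1) (by omega)).2 (by omega)
            have hval2 := (IH1 (j + 1) (by omega)).1 (by omega)
            rw [hval1, hval2, hsign]
            split_ifs with hcond
            · exfalso; push_cast at hcond; omega
            · rfl
      exact ⟨path, leafp, osc⟩
  refine ⟨σf, hPM, fun i => ⟨?_, fun t ht => ?_⟩⟩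
  · have h := ((main ((i : ℕ) + 2)).1 (i : ℕ) i.isLt).2 rfl
    rwa [Fin.eta] at h
  · have h := ((main t).1 (i : ℕ) i.isLt).1 (by omega)
    rwa [Fin.eta] at h
end

section
/- If a non-root vertex v of a perfect binary tree is weakly t_1-stable and its opinion is constant along even-parity times, i.e., ξ_t(v) = ξ_{t_1}(v) for every t ∈ {t_1, t_1+2, ..., t_2} where t_2 − t_1 is a positive even number, then v is weakly t_2-stable. -/
open SimpleGraph Set

variable {V : Type*}

/-- `G` is a perfect `k`-ary tree of height `h` rooted at `R`. -/
noncomputable def IsPerfectKAry (G : SimpleGraph V) (R : V) (k h : ℕ) : Prop :=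
  G.IsTree ∧ (∀ v, degree' G v = 1 ∨ degree' G v = k + 1) ∧
    (∀ v, degree' G v = 1 → G.dist R v = h) ∧ degree' G R = k + 1

/-- The set of descendants of `v` (including `v`) in the tree rooted at `R`:
those vertices `u` such that `v` lies on the (unique) geodesic from `R` to `u`. -/
noncomputable def desc (G : SimpleGraph V) (R v : V) : Set V :=
  {u | G.dist R u = G.dist R v + G.dist v u}

/-- `p` is the parent of `c` in the tree rooted at `R`. -/
noncomputable def IsParent (G : SimpleGraph V) (R p c : V) : Prop :=
  G.Adj p c ∧ G.dist R p + 1 = G.dist R c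

/-- `v` is weakly `t`-stable for the process `ξ` (in the tree rooted at `R`): there is a
vector of initial opinions agreeing with `ξ t` on the subtree of descendants of `v` for
which `v` is 0-stable. -/
noncomputable def WeaklyStable (G : SimpleGraph V) (R : V) (ξ : ℕ → V → ℤ) (v : V)
    (t : ℕ) : Prop :=
  ∃ σ' : V → ℤ, PM σ' ∧ (∀ w ∈ desc G R v, σ' w = ξ t w) ∧
    ∀ s, s % 2 = 0 → dyn G σ' (s + 2) v = dyn G σ' s v

section AuxLemmas

variable {G : SimpleGraph V}

lemma dyn_succ_def (G : SimpleGraph V) (σ : V → ℤ) (t : ℕ) :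
    dyn G σ (t + 1) = fun v => if 0 < ∑ᶠ u ∈ G.neighborSet v, dyn G σ t u then (1 : ℤ) else -1 := by
  simp [dyn]

lemma dyn_add (G : SimpleGraph V) (σ : V → ℤ) (a b : ℕ) :
    dyn G (dyn G σ a) b = dyn G σ (a + b) := by
  induction b with
  | zero => rfl
  | succ b ih =>
    rw [dyn_succ_def, ih, show a + (b + 1) = (a + b) + 1 from rfl, dyn_succ_def]

lemma dyn_pm_s9 (G : SimpleGraph V) (σ : V → ℤ) (hσ : PM σ) (s : ℕ) : PM (dyn G σ s) := by
  cases s with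
  | zero => exact hσ
  | succ s =>
    intro w
    rw [dyn_succ_def]
    dsimp only
    split <;> simp

/-- A walk that ends with a `concat` of an edge into a vertex not on the walk is a path. -/
lemma concat_isPath {a b c : V} (p : G.Walk a b) (hp : p.IsPath) (h : G.Adj b c)
    (hc : c ∉ p.support) : (p.concat h).IsPath := by
  rw [← SimpleGraph.Walk.isPath_reverse_iff, SimpleGraph.Walk.reverse_concat,
    SimpleGraph.Walk.cons_isPath_iff]
  refine ⟨hp.reverse, ?_⟩
  rwa [SimpleGraph.Walk.support_reverse, List.mem_reverse]

/-- In a tree, the distances to a fixed root of two adjacent vertices differ by exactly one. -/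
lemma tree_adj_dist (ht : G.IsTree) {a b : V} (hab : G.Adj a b) (r : V) :
    G.dist r a + 1 = G.dist r b ∨ G.dist r b + 1 = G.dist r a := by
  classical
  have hconn := ht.isConnected
  have h1 : G.dist a b = 1 := SimpleGraph.dist_eq_one_iff_adj.mpr hab
  have h1' : G.dist b a = 1 := SimpleGraph.dist_eq_one_iff_adj.mpr hab.symm
  have hle1 : G.dist r b ≤ G.dist r a + G.dist a b := hconn.dist_triangle
  have hle2 : G.dist r a ≤ G.dist r b + G.dist b a := hconn.dist_triangle
  have hne : G.dist r a ≠ G.dist r b := by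
    intro he
    rcases Nat.eq_zero_or_pos (G.dist r a) with h0 | hpos
    · have hra : r = a := (hconn.dist_eq_zero_iff).mp h0
      have hrb : r = b := (hconn.dist_eq_zero_iff).mp (he ▸ h0)
      exact hab.ne (hra ▸ hrb)
    · obtain ⟨p, hp, hpl⟩ := hconn.exists_path_of_dist r a
      obtain ⟨q, hq, hql⟩ := hconn.exists_path_of_dist r b
      have hbp : b ∉ p.support := by
        intro hb
        have hsplit := congrArg SimpleGraph.Walk.length (p.take_spec hb)
        rw [SimpleGraph.Walk.length_append] at hsplit
        have d1 : G.dist r b ≤ (p.takeUntil b hb).length := SimpleGraph.dist_le _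
        have d2 : G.dist b a ≤ (p.dropUntil b hb).length := SimpleGraph.dist_le _
        omega
      have hPpath : (p.concat hab).IsPath := concat_isPath p hp hab hbp
      have := (ht.existsUnique_path r b).unique hPpath hq
      have hlen := congrArg SimpleGraph.Walk.length this
      rw [SimpleGraph.Walk.length_concat] at hlen
      omega
  omega

/-- In a tree, the parent (w.r.t. any root) of a vertex is unique. -/
lemma tree_parent_unique (ht : G.IsTree) {r w x y : V} (hx : G.Adj x w) (hy : G.Adj y w)
    (hdx : G.dist r x + 1 = G.dist r w) (hdy : G.dist r y + 1 = G.dist r w) : x = y := by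
  classical
  have hconn := ht.isConnected
  obtain ⟨p, hp, hpl⟩ := hconn.exists_path_of_dist r x
  obtain ⟨q, hq, hql⟩ := hconn.exists_path_of_dist r y
  have hwp : w ∉ p.support := by
    intro hb
    have := SimpleGraph.Walk.length_takeUntil_le p hb
    have := SimpleGraph.dist_le (p.takeUntil w hb)
    omega
  have hwq : w ∉ q.support := by
    intro hb
    have := SimpleGraph.Walk.length_takeUntil_le q hb
    have := SimpleGraph.dist_le (q.takeUntil w hb)
    omega
  have hP : (p.concat hx).IsPath := concat_isPath p hp hx hwp
  have hQ : (q.concat hy).IsPath := concat_isPath q hq hy hwq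
  have hPQ := (ht.existsUnique_path r w).unique hP hQ
  have h1 : (p.concat hx).reverse.getVert 1 = x := by
    rw [SimpleGraph.Walk.reverse_concat, SimpleGraph.Walk.getVert_cons _ _ one_ne_zero]
    simp
  have h2 : (q.concat hy).reverse.getVert 1 = y := by
    rw [SimpleGraph.Walk.reverse_concat, SimpleGraph.Walk.getVert_cons _ _ one_ne_zero]
    simp
  rw [← h1, ← h2, hPQ]

/-- The set of descendants of `v ≠` the vertex itself is closed under taking neighbours. -/
lemma desc_closed (ht : G.IsTree) {R v w u : V} (hw : w ∈ desc G R v) (hwv : w ≠ v)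
    (hadj : G.Adj w u) : u ∈ desc G R v := by
  have hconn := ht.isConnected
  have hw' : G.dist R w = G.dist R v + G.dist v w := hw
  have h1 : G.dist w u = 1 := SimpleGraph.dist_eq_one_iff_adj.mpr hadj
  have htr1 : G.dist R u ≤ G.dist R v + G.dist v u := hconn.dist_triangle
  have htr2 : G.dist v u ≤ G.dist v w + G.dist w u := hconn.dist_triangle
  rcases tree_adj_dist ht hadj R with hA | hB
  · -- child case : dist R u = dist R w + 1
    show G.dist R u = G.dist R v + G.dist v u
    omega
  · -- parent case : dist R u + 1 = dist R w
    have hdpos : 0 < G.dist v w := by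
      rcases Nat.eq_zero_or_pos (G.dist v w) with h0 | h; · exact absurd ((hconn.dist_eq_zero_iff).mp h0).symm hwv
      exact h
    obtain ⟨qvw, hqp, hql⟩ := hconn.exists_path_of_dist v w
    -- extract the penultimate vertex of the geodesic from v to w
    obtain ⟨x, hxw, hxd⟩ : ∃ x, G.Adj w x ∧ G.dist v x + 1 = G.dist v w := by
      cases hrev : qvw.reverse with
      | nil =>
        have h0 : qvw.reverse.length = 0 := by rw [hrev]; rfl
        rw [SimpleGraph.Walk.length_reverse, hql] at h0
        omega
      | @cons _ x _ hadj' tail =>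
        refine ⟨x, hadj', ?_⟩
        have hlen : qvw.reverse.length = tail.length + 1 := by rw [hrev]; rfl
        rw [SimpleGraph.Walk.length_reverse, hql] at hlen
        have hle : G.dist v x ≤ tail.length := by
          rw [SimpleGraph.dist_comm]; exact SimpleGraph.dist_le tail
        have hxw1 : G.dist x w = 1 := SimpleGraph.dist_eq_one_iff_adj.mpr hadj'.symm
        have htr3 : G.dist v w ≤ G.dist v x + G.dist x w := hconn.dist_triangle
        omega
    -- x is a parent of w w.r.t. R, and so is u; hence u = x
    have hxR : G.dist R x + 1 = G.dist R w := by
      have htr4 : G.dist R x ≤ G.dist R v + G.dist v x := hconn.dist_triangle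
      have hxw1 : G.dist x w = 1 := SimpleGraph.dist_eq_one_iff_adj.mpr hxw.symm
      have htr5 : G.dist R w ≤ G.dist R x + G.dist x w := hconn.dist_triangle
      omega
    have hux : u = x := tree_parent_unique ht hadj.symm hxw.symm hB hxR
    show G.dist R u = G.dist R v + G.dist v u
    rw [hux]
    omega

/-- Locality of majority dynamics: the opinion of `w` at time `s` only depends on the
initial opinions at vertices at distance at most `s` and of the same parity as `s`. -/
lemma dyn_local (ht : G.IsTree) (σ₁ σ₂ : V → ℤ) :
    ∀ (s : ℕ) (w : V), (∀ u, G.dist w u ≤ s → G.dist w u % 2 = s % 2 → σ₁ u = σ₂ u) →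
      dyn G σ₁ s w = dyn G σ₂ s w := by
  intro s
  induction s with
  | zero =>
    intro w hag
    exact hag w (by rw [SimpleGraph.dist_self]) (by rw [SimpleGraph.dist_self])
  | succ s ih =>
    intro w hag
    rw [dyn_succ_def, dyn_succ_def]
    dsimp only
    have hsum : ∑ᶠ u ∈ G.neighborSet w, dyn G σ₁ s u = ∑ᶠ u ∈ G.neighborSet w, dyn G σ₂ s u := by
      refine finsum_mem_congr rfl ?_
      intro u hu
      have hadj : G.Adj w u := hu
      have h1 : G.dist w u = 1 := SimpleGraph.dist_eq_one_iff_adj.mpr hadj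
      refine ih u ?_
      intro x hx1 hx2
      have htr : G.dist w x ≤ G.dist w u + G.dist u x := ht.isConnected.dist_triangle
      have hpar := tree_adj_dist ht hadj x
      have e1 : G.dist x w = G.dist w x := SimpleGraph.dist_comm
      have e2 : G.dist x u = G.dist u x := SimpleGraph.dist_comm
      exact hag x (by omega) (by omega)
    rw [hsum]

lemma even_stable {f : ℕ → ℤ} (hst : ∀ s, s % 2 = 0 → f (s + 2) = f s) (k : ℕ) :
    f (2 * k) = f 0 := by
  induction k with
  | zero => rfl
  | succ k ih =>
    have h := hst (2 * k) (by omega)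
    rw [show 2 * (k + 1) = 2 * k + 2 by ring, h, ih]

lemma dyn_even_stable (G : SimpleGraph V) (σ' : V → ℤ) (v : V)
    (hst : ∀ s, s % 2 = 0 → dyn G σ' (s + 2) v = dyn G σ' s v) {s : ℕ} (hs : s % 2 = 0) :
    dyn G σ' s v = σ' v := by
  have := even_stable (f := fun s => dyn G σ' s v) hst (s / 2)
  rwa [show 2 * (s / 2) = s by omega] at this

/-- Transfer lemma: inside the subtree of descendants of `v`, the auxiliary process started
from `σ'` tracks the true process (shifted by `t₁`) at parity-compatible times. -/
lemma transfer (ht : G.IsTree) (R v : V) (σ σ' : V → ℤ) (t₁ T : ℕ)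
    (hagree : ∀ w ∈ desc G R v, σ' w = dyn G σ t₁ w)
    (hst : ∀ s, s % 2 = 0 → dyn G σ' (s + 2) v = dyn G σ' s v)
    (hop' : ∀ s, s ≤ T → s % 2 = 0 → dyn G σ (t₁ + s) v = dyn G σ t₁ v) :
    ∀ s, s ≤ T → ∀ w ∈ desc G R v, G.dist v w % 2 = s % 2 →
      dyn G σ' s w = dyn G σ (t₁ + s) w := by
  intro s
  induction s with
  | zero =>
    intro _ w hwdesc _
    exact hagree w hwdesc
  | succ s ih =>
    intro hsle w hwdesc hpar
    by_cases hwv : w = v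
    · have h0 : (s + 1) % 2 = 0 := by
        have hvv : G.dist v w = 0 := by rw [hwv, SimpleGraph.dist_self]
        omega
      have hvdesc : v ∈ desc G R v := by
        show G.dist R v = G.dist R v + G.dist v v
        rw [SimpleGraph.dist_self]
        omega
      rw [hwv, dyn_even_stable G σ' v hst h0, hagree v hvdesc, hop' (s + 1) hsle h0]
    · have hstep : t₁ + (s + 1) = (t₁ + s) + 1 := rfl
      rw [hstep, dyn_succ_def, dyn_succ_def]
      dsimp only
      have hsum : ∑ᶠ u ∈ G.neighborSet w, dyn G σ' s u
          = ∑ᶠ u ∈ G.neighborSet w, dyn G σ (t₁ + s) u := by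
        refine finsum_mem_congr rfl ?_
        intro u hu
        have hadj : G.Adj w u := hu
        have hmem : u ∈ desc G R v := desc_closed ht hwdesc hwv hadj
        have hp := tree_adj_dist ht hadj v
        exact ih (by omega) u hmem (by omega)
      rw [hsum]

end AuxLemmas

/-- If a non-root vertex `v` of a perfect binary tree is weakly
`t₁`-stable and its opinion is constant over the even-parity times
`t ∈ {t₁, t₁+2, …, t₂}` (with `t₂ - t₁` positive and even), then `v` is weakly
`t₂`-stable. -/
theorem maintain_weak_stability [Fintype V] (G : SimpleGraph V) (R : V) (h : ℕ)
    (hh : 1 ≤ h) (hperf : IsPerfectKAry G R 2 h) (v : V) (hv : v ≠ R)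
    (σ : V → ℤ) (hσ : PM σ) (t₁ t₂ : ℕ) (hlt : t₁ < t₂) (hpar : Even (t₂ - t₁))
    (hw : WeaklyStable G R (dyn G σ) v t₁)
    (hop : ∀ t, t₁ ≤ t → t ≤ t₂ → t % 2 = t₁ % 2 → dyn G σ t v = dyn G σ t₁ v) :
    WeaklyStable G R (dyn G σ) v t₂ := by
  classical
  obtain ⟨ht, -, -, -⟩ := hperf
  obtain ⟨σ', hσ'pm, hσ'ag, hσ'st⟩ := hw
  set T := t₂ - t₁ with hTdef
  have hT2 : t₁ + T = t₂ := by omega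
  have hTpos : 0 < T := by omega
  have hTeven : T % 2 = 0 := Nat.even_iff.mp hpar
  have hop' : ∀ s, s ≤ T → s % 2 = 0 → dyn G σ (t₁ + s) v = dyn G σ t₁ v := by
    intro s hsle hs
    exact hop (t₁ + s) (by omega) (by omega) (by omega)
  have htrans := transfer ht R v σ σ' t₁ T hσ'ag hσ'st hop'
  refine ⟨fun u => if G.dist v u % 2 = 0 then dyn G σ' T u else dyn G σ t₂ u, ?_, ?_, ?_⟩
  · intro u
    dsimp only
    split
    · exact dyn_pm_s9 G σ' hσ'pm T u
    · exact dyn_pm_s9 G σ hσ t₂ u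
  · intro w hwdesc
    dsimp only
    split
    · rename_i hd
      rw [← hT2]
      exact htrans T le_rfl w hwdesc (by omega)
    · rfl
  · intro s hs
    have key : ∀ s', s' % 2 = 0 →
        dyn G (fun u => if G.dist v u % 2 = 0 then dyn G σ' T u else dyn G σ t₂ u) s' v
          = dyn G σ' (T + s') v := by
      intro s' hs'
      rw [← dyn_add]
      apply dyn_local ht
      intro u hdu hpu
      rw [if_pos (by omega)]
    rw [key (s + 2) (by omega), key s hs]
    exact hσ'st (T + s) (by omega)
end
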